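/- Let $\psi(q) = 1/(q \log q)$ for $q \ge 2$. Then the set of $\omega \in [1,\infty)$ for which there exist infinitely many pairs $(p,q) \in \mathbb{Z} \times \mathbb{N}$ with $|\omega - p/q| \le \psi(q)/q$ has full Lebesgue measure in $[1,\infty)$, i.e. its complement in $[1,\infty)$ has Lebesgue measure zero. -/

import Mathlib

open MeasureTheory Set

namespace Khinchin

/-- The elementary continued-fraction matrix. -/
def mA (a : ℕ) : Matrix (Fin 2) (Fin 2) ℕ := !![0, 1; 1, a]

def M (L : List ℕ) : Matrix (Fin 2) (Fin 2) ℕ := (L.map mA).prod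

lemma M_nil : M [] = 1 := rfl

lemma M_append (L : List ℕ) (a : ℕ) : M (L ++ [a]) = M L * mA a := by
  simp [M, List.prod_append]

/-- convergent numerators/denominators -/
def pp (L : List ℕ) : ℕ := M L 0 1   -- p_n
def pp' (L : List ℕ) : ℕ := M L 0 0  -- p_{n-1}
def qq (L : List ℕ) : ℕ := M L 1 1   -- q_n
def qq' (L : List ℕ) : ℕ := M L 1 0  -- q_{n-1}

lemma pp'_append (L : List ℕ) (a : ℕ) : pp' (L ++ [a]) = pp L := by
  simp [pp', pp, M_append, Matrix.mul_apply, Fin.sum_univ_two, mA]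

lemma pp_append (L : List ℕ) (a : ℕ) : pp (L ++ [a]) = pp' L + a * pp L := by
  simp [pp', pp, M_append, Matrix.mul_apply, Fin.sum_univ_two, mA]; ring

lemma qq'_append (L : List ℕ) (a : ℕ) : qq' (L ++ [a]) = qq L := by
  simp [qq', qq, M_append, Matrix.mul_apply, Fin.sum_univ_two, mA]

lemma qq_append (L : List ℕ) (a : ℕ) : qq (L ++ [a]) = qq' L + a * qq L := by
  simp [qq', qq, M_append, Matrix.mul_apply, Fin.sum_univ_two, mA]; ring

lemma qq_nil : qq [] = 1 := rfl
lemma qq'_nil : qq' [] = 0 := rfl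
lemma pp_nil : pp [] = 0 := rfl
lemma pp'_nil : pp' [] = 1 := rfl

lemma one_le_qq (L : List ℕ) (hL : ∀ x ∈ L, 1 ≤ x) : 1 ≤ qq L := by
  induction L using List.reverseRecOn with
  | nil => simp [qq_nil]
  | append_singleton L a ih =>
    have ha : 1 ≤ a := hL a (by simp)
    have h1 : 1 ≤ qq L := ih (fun x hx => hL x (by simp [hx]))
    rw [qq_append]
    nlinarith

lemma qq'_le_qq (L : List ℕ) (hL : ∀ x ∈ L, 1 ≤ x) : qq' L ≤ qq L := by
  induction L using List.reverseRecOn with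
  | nil => simp [qq_nil, qq'_nil]
  | append_singleton L a ih =>
    have ha : 1 ≤ a := hL a (by simp)
    have h1 : 1 ≤ qq L := one_le_qq L (fun x hx => hL x (by simp [hx]))
    rw [qq_append, qq'_append]
    have := ih (fun x hx => hL x (by simp [hx]))
    nlinarith

lemma length_le_qq (L : List ℕ) (hL : ∀ x ∈ L, 1 ≤ x) : L.length ≤ qq L := by
  induction L using List.reverseRecOn with
  | nil => simp [qq_nil]
  | append_singleton L a ih =>
    have ha : 1 ≤ a := hL a (by simp)
    have h1 : 1 ≤ qq L := one_le_qq L (fun x hx => hL x (by simp [hx]))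
    have h2 : qq' L ≤ qq L := qq'_le_qq L (fun x hx => hL x (by simp [hx]))
    have h3 : L.length ≤ qq L := ih (fun x hx => hL x (by simp [hx]))
    have h4 : L = [] ∨ 1 ≤ qq' L := by
      rcases L.eq_nil_or_concat with h | ⟨L', a', rfl⟩
      · exact Or.inl h
      · right; rw [List.concat_eq_append, qq'_append]; exact one_le_qq L' (fun x hx => hL x (by simp [List.concat_eq_append, hx]))
    rw [qq_append]
    rcases h4 with h | h
    · subst h; simp [qq_nil, qq'_nil] at *; omega
    · simp only [List.length_append, List.length_singleton]
      nlinarith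

/-- determinant identity -/
lemma det_eq (L : List ℕ) :
    ((pp' L : ℤ) * qq L - pp L * qq' L = 1) ∨ ((pp' L : ℤ) * qq L - pp L * qq' L = -1) := by
  induction L using List.reverseRecOn with
  | nil => left; simp [pp_nil, pp'_nil, qq_nil, qq'_nil]
  | append_singleton L a ih =>
    rw [pp_append, pp'_append, qq_append, qq'_append]
    push_cast
    rcases ih with h | h
    · right; linear_combination -h
    · left; linear_combination -h

end Khinchin

namespace Khinchin
open MeasureTheory Set

noncomputable def fM (L : List ℕ) (t : ℝ) : ℝ :=
  ((pp' L : ℝ) * t + pp L) / ((qq' L : ℝ) * t + qq L)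

lemma denom_pos (L : List ℕ) (hL : ∀ x ∈ L, 1 ≤ x) {t : ℝ} (ht : 0 ≤ t) :
    0 < (qq' L : ℝ) * t + qq L := by
  have h1 : (1:ℝ) ≤ qq L := by exact_mod_cast one_le_qq L hL
  have h2 : (0:ℝ) ≤ qq' L := by positivity
  nlinarith

lemma fM_nil (t : ℝ) : fM [] t = t := by
  simp [fM, pp_nil, pp'_nil, qq_nil, qq'_nil]

lemma fM_zero (L : List ℕ) : fM L 0 = (pp L : ℝ) / qq L := by
  simp [fM]

/-- composition: `fM (L ++ [a]) s = fM L (1/(a+s))` -/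
lemma fM_append (L : List ℕ) (hL : ∀ x ∈ L, 1 ≤ x) (a : ℕ) (ha : 1 ≤ a) {s : ℝ}
    (hs : 0 < s) : fM (L ++ [a]) s = fM L (1 / ((a : ℝ) + s)) := by
  have has : (0:ℝ) < (a:ℝ) + s := by positivity
  have h1 : (1:ℝ) ≤ qq L := by exact_mod_cast one_le_qq L hL
  have h2 : (0:ℝ) ≤ qq' L := by positivity
  have hd1 : (0:ℝ) < (qq' (L ++ [a]) : ℝ) * s + qq (L ++ [a]) := by
    apply denom_pos _ _ hs.le
    intro x hx
    rcases List.mem_append.1 hx with h | h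
    · exact hL x h
    · simp at h; omega
  have hd2 : (0:ℝ) < (qq' L : ℝ) * (1 / ((a:ℝ) + s)) + qq L := by
    have : (0:ℝ) ≤ (qq' L : ℝ) * (1 / ((a:ℝ) + s)) := by positivity
    linarith
  rw [fM, fM, pp'_append, pp_append, qq'_append, qq_append] at *
  push_cast at hd1 ⊢
  rw [div_eq_div_iff (by linarith) hd2.ne']
  field_simp
  ring

lemma fM_sub_zero (L : List ℕ) (hL : ∀ x ∈ L, 1 ≤ x) {t : ℝ} (ht : 0 ≤ t) :
    |fM L t - fM L 0| = t / (((qq' L : ℝ) * t + qq L) * qq L) := by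
  have h1 : (0:ℝ) < qq L := by exact_mod_cast one_le_qq L hL
  have hd : (0:ℝ) < (qq' L : ℝ) * t + qq L := denom_pos L hL ht
  have key : fM L t - fM L 0 = t * ((pp' L : ℝ) * qq L - pp L * qq' L) /
      (((qq' L : ℝ) * t + qq L) * qq L) := by
    rw [fM, fM]
    field_simp
    ring
  have habs : |(pp' L : ℝ) * qq L - pp L * qq' L| = 1 := by
    rcases det_eq L with h | h
    · have : ((pp' L : ℝ) * qq L - pp L * qq' L) = 1 := by exact_mod_cast congrArg Int.cast h
      rw [this, abs_one]
    · have : ((pp' L : ℝ) * qq L - pp L * qq' L) = -1 := by exact_mod_cast congrArg Int.cast h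
      rw [this, abs_neg, abs_one]
  rw [key, abs_div, abs_of_pos (mul_pos hd h1), abs_mul, abs_of_nonneg ht, habs, mul_one]

/-- the length of the cylinder interval -/
noncomputable def ν (L : List ℕ) : ℝ := 1 / ((qq L : ℝ) * ((qq L : ℝ) + qq' L))

lemma ν_pos (L : List ℕ) (hL : ∀ x ∈ L, 1 ≤ x) : 0 < ν L := by
  have h1 : (0:ℝ) < qq L := by exact_mod_cast one_le_qq L hL
  have h2 : (0:ℝ) ≤ qq' L := by positivity
  rw [ν]; positivity

lemma fM_dist_le (L : List ℕ) (hL : ∀ x ∈ L, 1 ≤ x) {t : ℝ} (ht0 : 0 ≤ t) (ht1 : t ≤ 1) :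
    |fM L t - fM L 0| ≤ ν L := by
  rw [fM_sub_zero L hL ht0, ν]
  have h1 : (0:ℝ) < qq L := by exact_mod_cast one_le_qq L hL
  have h2 : (0:ℝ) ≤ qq' L := by positivity
  have hd : (0:ℝ) < (qq' L : ℝ) * t + qq L := denom_pos L hL ht0
  rw [div_le_div_iff₀ (by positivity) (by positivity)]
  nlinarith [mul_le_mul_of_nonneg_right ht1 (mul_pos h1 h1).le, mul_nonneg h2 ht0]

/-- cylinder sets -/
noncomputable def Cyl (L : List ℕ) : Set ℝ :=
  fM L '' {t | t ∈ Ioo (0:ℝ) 1 ∧ Irrational t}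

lemma Cyl_nil : Cyl [] = {t | t ∈ Ioo (0:ℝ) 1 ∧ Irrational t} := by
  rw [Cyl]
  convert image_id _
  exact funext fM_nil

lemma Cyl_subset_ball (L : List ℕ) (hL : ∀ x ∈ L, 1 ≤ x) :
    Cyl L ⊆ Metric.closedBall (fM L 0) (ν L) := by
  rintro x ⟨t, ⟨⟨ht0, ht1⟩, -⟩, rfl⟩
  rw [Metric.mem_closedBall, Real.dist_eq]
  exact fM_dist_le L hL ht0.le ht1.le

lemma volume_Cyl_le (L : List ℕ) (hL : ∀ x ∈ L, 1 ≤ x) :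
    volume (Cyl L) ≤ ENNReal.ofReal (2 * ν L) := by
  calc volume (Cyl L) ≤ volume (Metric.closedBall (fM L 0) (ν L)) :=
        measure_mono (Cyl_subset_ball L hL)
    _ = ENNReal.ofReal (2 * ν L) := by rw [Real.volume_closedBall]

/-- every irrational point of a cylinder lies in a child cylinder -/
lemma child_of_t (L : List ℕ) (hL : ∀ x ∈ L, 1 ≤ x) {t : ℝ}
    (ht : t ∈ Ioo (0:ℝ) 1 ∧ Irrational t) :
    ∃ a : ℕ, 1 ≤ a ∧ (a : ℝ) ≤ 1 / t ∧ fM L t ∈ Cyl (L ++ [a]) := by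
  obtain ⟨⟨ht0, ht1⟩, htirr⟩ := ht
  have hu0 : (0:ℝ) < 1 / t := by positivity
  have hu1 : 1 < 1 / t := by
    rw [lt_div_iff₀ ht0]; linarith
  have huirr : Irrational (1 / t) := by
    rw [one_div]; exact htirr.inv
  set a : ℕ := ⌊1 / t⌋₊ with ha_def
  have ha1 : 1 ≤ a := Nat.le_floor (by exact_mod_cast hu1.le)
  have hale : (a : ℝ) ≤ 1 / t := Nat.floor_le hu0.le
  have halt : 1 / t < (a : ℝ) + 1 := Nat.lt_floor_add_one _
  refine ⟨a, ha1, hale, ?_⟩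
  set s : ℝ := 1 / t - a with hs_def
  have hs0 : 0 < s := by
    have : (a : ℝ) ≠ 1 / t := fun h => (huirr.ne_nat a h.symm)
    rw [hs_def]; cases lt_or_eq_of_le hale with
    | inl h => linarith
    | inr h => exact absurd h this
  have hs1 : s < 1 := by rw [hs_def]; linarith
  have hsirr : Irrational s := huirr.sub_natCast a
  have hts : t = 1 / ((a : ℝ) + s) := by
    rw [hs_def]
    have : (a:ℝ) + (1 / t - a) = 1 / t := by ring
    rw [this, one_div_one_div]
  refine ⟨s, ⟨⟨hs0, hs1⟩, hsirr⟩, ?_⟩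
  rw [fM_append L hL a ha1 hs0, ← hts]

lemma exists_mem_Cyl (L : List ℕ) (hL : ∀ x ∈ L, 1 ≤ x) {x : ℝ} (hx : x ∈ Cyl L) :
    ∃ a : ℕ, 1 ≤ a ∧ x ∈ Cyl (L ++ [a]) := by
  obtain ⟨t, ht, rfl⟩ := hx
  obtain ⟨a, ha1, -, hmem⟩ := child_of_t L hL ht
  exact ⟨a, ha1, hmem⟩

/-- covering of the irrationals by level-n cylinders -/
lemma covering (n : ℕ) :
    {t | t ∈ Ioo (0:ℝ) 1 ∧ Irrational t} ⊆
      ⋃ (L : List ℕ) (_ : (∀ x ∈ L, 1 ≤ x) ∧ L.length = n), Cyl L := by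
  induction n with
  | zero =>
    intro x hx
    refine mem_iUnion.2 ⟨[], mem_iUnion.2 ⟨⟨by simp, rfl⟩, ?_⟩⟩
    rw [Cyl_nil]; exact hx
  | succ n ih =>
    intro x hx
    obtain ⟨L, hL⟩ := mem_iUnion.1 (ih hx)
    obtain ⟨⟨hgood, hlen⟩, hmem⟩ := mem_iUnion.1 hL
    obtain ⟨a, ha1, hmem'⟩ := exists_mem_Cyl L hgood hmem
    refine mem_iUnion.2 ⟨L ++ [a], mem_iUnion.2 ⟨⟨?_, by simp [hlen]⟩, hmem'⟩⟩
    intro y hy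
    rcases List.mem_append.1 hy with h | h
    · exact hgood y h
    · simp at h; omega

end Khinchin

namespace Khinchin
open MeasureTheory Set Filter

noncomputable def mfun (q : ℕ) : ℕ := ⌊Real.log q⌋₊ + 1

lemma mfun_mono : Monotone mfun := by
  intro q1 q2 h
  unfold mfun
  rcases Nat.eq_zero_or_pos q1 with h1 | h1
  · subst h1
    simp only [Nat.cast_zero, Real.log_zero, Nat.floor_zero]
    omega
  · have : Real.log q1 ≤ Real.log q2 :=
      Real.log_le_log (by exact_mod_cast h1) (by exact_mod_cast h)
    have := Nat.floor_mono this
    omega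

lemma one_le_mfun (q : ℕ) : 1 ≤ mfun q := by unfold mfun; omega

lemma log_lt_mfun (q : ℕ) : Real.log q < mfun q := by
  unfold mfun
  push_cast
  exact Nat.lt_floor_add_one _

lemma mfun_le (q : ℕ) (hq : 1 ≤ q) : (mfun q : ℝ) ≤ Real.log q + 1 := by
  unfold mfun
  push_cast
  have h0 : (0:ℝ) ≤ Real.log q := Real.log_nonneg (by exact_mod_cast hq)
  have := Nat.floor_le h0
  linarith

lemma two_lt_log_eight : (2:ℝ) < Real.log 8 := by
  have h2 : (0.6931471803 : ℝ) < Real.log 2 := Real.log_two_gt_d9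
  have : Real.log 8 = 3 * Real.log 2 := by
    rw [show (8:ℝ) = 2 ^ 3 by norm_num, Real.log_pow]
    push_cast; ring
  rw [this]; linarith

lemma three_le_mfun {q : ℕ} (hq : 8 ≤ q) : 3 ≤ mfun q := by
  unfold mfun
  have h8 : (2:ℝ) ≤ Real.log q := by
    have : Real.log 8 ≤ Real.log q := Real.log_le_log (by norm_num) (by exact_mod_cast hq)
    linarith [two_lt_log_eight]
  have : 2 ≤ ⌊Real.log q⌋₊ := Nat.le_floor (by exact_mod_cast h8)
  omega

noncomputable def Pf : ℕ → ℕ → ℝ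
  | 0, _ => 1
  | j+1, q => (1 - 1/(mfun q : ℝ)) * Pf j (q * mfun q)

lemma factor_nonneg (q : ℕ) : 0 ≤ 1 - 1/(mfun q : ℝ) := by
  have h := one_le_mfun q
  have h1 : (1:ℝ) ≤ (mfun q : ℝ) := by exact_mod_cast h
  have : 1/(mfun q : ℝ) ≤ 1 := by
    rw [div_le_one (by linarith)]; linarith
  linarith

lemma factor_le_one (q : ℕ) : 1 - 1/(mfun q : ℝ) ≤ 1 := by
  have h1 : (0:ℝ) < (mfun q : ℝ) := by exact_mod_cast one_le_mfun q
  have : 0 ≤ 1/(mfun q : ℝ) := by positivity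
  linarith

lemma Pf_nonneg (j : ℕ) (q : ℕ) : 0 ≤ Pf j q := by
  induction j generalizing q with
  | zero => norm_num [Pf]
  | succ j ih => exact mul_nonneg (factor_nonneg q) (ih _)

lemma Pf_le_one (j : ℕ) (q : ℕ) : Pf j q ≤ 1 := by
  induction j generalizing q with
  | zero => norm_num [Pf]
  | succ j ih =>
    calc Pf (j+1) q ≤ 1 * Pf j (q * mfun q) := by
          exact mul_le_mul_of_nonneg_right (factor_le_one q) (Pf_nonneg _ _)
      _ ≤ 1 := by rw [one_mul]; exact ih _

lemma factor_mono {q1 q2 : ℕ} (h : q1 ≤ q2) :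
    1 - 1/(mfun q1 : ℝ) ≤ 1 - 1/(mfun q2 : ℝ) := by
  have hm := mfun_mono h
  have h1 : (0:ℝ) < (mfun q1 : ℝ) := by exact_mod_cast one_le_mfun q1
  have h2 : (0:ℝ) < (mfun q2 : ℝ) := by exact_mod_cast one_le_mfun q2
  have : 1/(mfun q2 : ℝ) ≤ 1/(mfun q1 : ℝ) := by
    apply one_div_le_one_div_of_le h1
    exact_mod_cast hm
  linarith

lemma Pf_mono (j : ℕ) {q1 q2 : ℕ} (h : q1 ≤ q2) : Pf j q1 ≤ Pf j q2 := by
  induction j generalizing q1 q2 with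
  | zero => simp [Pf]
  | succ j ih =>
    have h' : q1 * mfun q1 ≤ q2 * mfun q2 := Nat.mul_le_mul h (mfun_mono h)
    exact mul_le_mul (factor_mono h) (ih h') (Pf_nonneg _ _) (factor_nonneg q2)

/-- the iterated denominator bound -/
noncomputable def Qit (q : ℕ) : ℕ → ℕ
  | 0 => q
  | k+1 => Qit q k * mfun (Qit q k)

@[simp] lemma Qit_zero (q : ℕ) : Qit q 0 = q := rfl

@[simp] lemma Qit_succ (q k : ℕ) : Qit q (k+1) = Qit q k * mfun (Qit q k) := rfl

lemma Qit_shift (q : ℕ) (k : ℕ) : Qit q (k+1) = Qit (q * mfun q) k := by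
  induction k with
  | zero => rfl
  | succ k ih => rw [Qit_succ q (k+1), ih, ← Qit_succ]

lemma Pf_eq_prod (j : ℕ) (q : ℕ) :
    Pf j q = ∏ k ∈ Finset.range j, (1 - 1/(mfun (Qit q k) : ℝ)) := by
  induction j generalizing q with
  | zero => simp [Pf]
  | succ j ih =>
    rw [Finset.prod_range_succ']
    show (1 - 1/(mfun q : ℝ)) * Pf j (q * mfun q) = _
    rw [ih]
    have h : ∀ k, Qit q (k+1) = Qit (q * mfun q) k := Qit_shift q
    simp only [h, Qit_zero]
    rw [mul_comm]

lemma eight_le_Qit {q : ℕ} (hq : 8 ≤ q) (k : ℕ) : 8 ≤ Qit q k := by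
  induction k with
  | zero => exact hq
  | succ k ih =>
    have := one_le_mfun (Qit q k)
    rw [Qit_succ]
    calc 8 ≤ Qit q k := ih
      _ = Qit q k * 1 := by ring
      _ ≤ Qit q k * mfun (Qit q k) := Nat.mul_le_mul_left _ this

lemma Qit_ge {q : ℕ} (hq : 8 ≤ q) (k : ℕ) : q + k ≤ Qit q k := by
  induction k with
  | zero => simp [Qit]
  | succ k ih =>
    have h8 := eight_le_Qit hq k
    have h3 := three_le_mfun h8
    rw [Qit_succ]
    calc q + (k+1) ≤ Qit q k + 1 := by omega
      _ ≤ Qit q k * mfun (Qit q k) := by nlinarith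

/-- triple log -/
noncomputable def g (q : ℕ) : ℝ := Real.log (Real.log (Real.log q))

lemma log_add_le {A B : ℝ} (hA : 0 < A) (hB : 0 < B) :
    Real.log (A + B) ≤ Real.log A + B / A := by
  have h1 : Real.log (A + B) - Real.log A = Real.log ((A+B)/A) :=
    (Real.log_div (by linarith) hA.ne').symm
  have h2 : Real.log ((A+B)/A) ≤ (A+B)/A - 1 := Real.log_le_sub_one_of_pos (by positivity)
  have h3 : (A+B)/A - 1 = B/A := by field_simp; ring
  linarith

/-- key telescoping step: `1/mfun Q ≥ (1/4)(g (Q·mfun Q) − g Q)` -/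
lemma telescope_step {Q : ℕ} (hQ : 8 ≤ Q) :
    g (Q * mfun Q) - g Q ≤ 4 * (1 / (mfun Q : ℝ)) := by
  set L : ℝ := Real.log Q with hL_def
  have hL2 : 2 < L := by
    rw [hL_def]
    calc (2:ℝ) < Real.log 8 := two_lt_log_eight
      _ ≤ Real.log Q := Real.log_le_log (by norm_num) (by exact_mod_cast hQ)
  set m : ℕ := mfun Q with hm_def
  have hm3 : 3 ≤ m := three_le_mfun hQ
  have hm3' : (3:ℝ) ≤ (m:ℝ) := by exact_mod_cast hm3
  have hmL : (m:ℝ) ≤ L + 1 := mfun_le Q (by omega)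
  have hm2L : (m:ℝ) ≤ 2*L := by linarith
  -- log of product
  have hQpos : (0:ℝ) < Q := by exact_mod_cast (by omega : 0 < Q)
  have hmpos : (0:ℝ) < (m:ℝ) := by linarith
  have hlogprod : Real.log ((Q : ℕ) * m : ℕ) = L + Real.log m := by
    push_cast
    rw [Real.log_mul (by positivity) (by positivity)]
  have hlogm_pos : (0:ℝ) < Real.log m := Real.log_pos (by linarith)
  have hlogm_le : Real.log m ≤ 2 * Real.log L := by
    have h1 : Real.log m ≤ Real.log (2*L) := Real.log_le_log hmpos hm2L
    have h2 : Real.log (2*L) = Real.log 2 + Real.log L := Real.log_mul (by norm_num) (by linarith)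
    have h3 : Real.log 2 ≤ Real.log L := Real.log_le_log (by norm_num) (by linarith)
    linarith
  have hlogL_pos : (0:ℝ) < Real.log L := Real.log_pos (by linarith)
  -- (b): log(L + log m) ≤ log L + log m / L
  have hb : Real.log (L + Real.log m) ≤ Real.log L + Real.log m / L :=
    log_add_le (by linarith) hlogm_pos
  -- (c): g(Qm) - g(Q) ≤ log m / (L * log L)
  have hc : g (Q * m) - g Q ≤ Real.log m / (L * Real.log L) := by
    unfold g
    rw [hlogprod, ← hL_def]
    have h0 : (0:ℝ) < L := by linarith
    have hLLm_pos : (0:ℝ) < Real.log (L + Real.log m) := Real.log_pos (by linarith)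
    have h1 : Real.log (Real.log (L + Real.log m)) ≤
        Real.log (Real.log L + Real.log m / L) :=
      Real.log_le_log hLLm_pos hb
    have h2 : Real.log (Real.log L + Real.log m / L) ≤
        Real.log (Real.log L) + (Real.log m / L) / (Real.log L) :=
      log_add_le hlogL_pos (by positivity)
    have h4 : (Real.log m / L) / (Real.log L) = Real.log m / (L * Real.log L) := div_div _ _ _
    linarith
  -- (d): m * log m ≤ 4 L log L  hence  log m/(L log L) ≤ 4/m
  have hd : Real.log m / (L * Real.log L) ≤ 4 * (1/(m:ℝ)) := by
    have key : (m:ℝ) * Real.log m ≤ 4 * (L * Real.log L) := by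
      have : (m:ℝ) * Real.log m ≤ (2*L) * (2*Real.log L) :=
        mul_le_mul hm2L hlogm_le hlogm_pos.le (by linarith)
      linarith
    have hm0 : (0:ℝ) < (m:ℝ) := by linarith
    rw [div_le_iff₀ (by positivity)]
    have h4 : 4*(1/(m:ℝ))*(L*Real.log L) = 4*(L*Real.log L)/m := by ring
    rw [h4, le_div_iff₀ hm0]
    nlinarith
  linarith

lemma sum_telescope {q : ℕ} (hq : 8 ≤ q) (j : ℕ) :
    g (Qit q j) - g q ≤ 4 * ∑ k ∈ Finset.range j, (1 / (mfun (Qit q k) : ℝ)) := by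
  induction j with
  | zero => simp
  | succ j ih =>
    rw [Finset.sum_range_succ]
    have hstep : g (Qit q (j+1)) - g (Qit q j) ≤ 4 * (1 / (mfun (Qit q j) : ℝ)) :=
      telescope_step (eight_le_Qit hq j)
    show g (Qit q j * mfun (Qit q j)) - g q ≤ _
    have : g (Qit q (j+1)) = g (Qit q j * mfun (Qit q j)) := rfl
    rw [← this]
    linarith

lemma Pf_le_exp {q : ℕ} (j : ℕ) :
    Pf j q ≤ Real.exp (- ∑ k ∈ Finset.range j, (1 / (mfun (Qit q k) : ℝ))) := by
  rw [Pf_eq_prod]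
  have : Real.exp (- ∑ k ∈ Finset.range j, (1 / (mfun (Qit q k) : ℝ)))
      = ∏ k ∈ Finset.range j, Real.exp (-(1 / (mfun (Qit q k) : ℝ))) := by
    rw [← Real.exp_sum, Finset.sum_neg_distrib]
  rw [this]
  apply Finset.prod_le_prod
  · intro k _; exact factor_nonneg _
  · intro k _
    have := Real.add_one_le_exp (-(1 / (mfun (Qit q k) : ℝ)))
    linarith

lemma Pf_tendsto_zero {q : ℕ} (hq : 8 ≤ q) :
    Filter.Tendsto (fun j => Pf j q) atTop (nhds 0) := by
  have h1 : Tendsto (fun j : ℕ => (Qit q j : ℝ)) atTop atTop := by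
    apply tendsto_atTop_mono (fun j => by exact_mod_cast Qit_ge hq j :
      ∀ j : ℕ, ((q : ℝ) + j) ≤ (Qit q j : ℝ))
    apply tendsto_atTop_add_const_left
    exact tendsto_natCast_atTop_atTop
  have hg : Tendsto (fun j => g (Qit q j)) atTop atTop := by
    unfold g
    exact Real.tendsto_log_atTop.comp (Real.tendsto_log_atTop.comp
      (Real.tendsto_log_atTop.comp h1))
  have hupper : Tendsto (fun j => Real.exp (-((g (Qit q j) - g q)/4))) atTop (nhds 0) := by
    apply Real.tendsto_exp_atBot.comp
    apply tendsto_neg_atTop_atBot.comp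
    apply Tendsto.atTop_div_const (by norm_num : (0:ℝ) < 4)
    exact tendsto_atTop_add_const_right _ _ hg
  have hle : ∀ j, Pf j q ≤ Real.exp (-((g (Qit q j) - g q)/4)) := by
    intro j
    refine le_trans (Pf_le_exp j) (Real.exp_le_exp.2 ?_)
    have := sum_telescope hq j
    linarith
  exact tendsto_of_tendsto_of_tendsto_of_le_of_le tendsto_const_nhds hupper
    (fun j => Pf_nonneg j q) hle

end Khinchin

namespace Khinchin
open MeasureTheory Set Filter

/-- the set of `x ∈ (0,1)` irrational with no good approximation of denominator `≥ N` -/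
def EN (N : ℕ) : Set ℝ :=
  {x | x ∈ Ioo (0:ℝ) 1 ∧ Irrational x ∧ ∀ q : ℕ, N ≤ q → ∀ p : ℤ,
    ¬(|x - (p : ℝ)/(q : ℝ)| ≤ (1/((q:ℝ) * Real.log q))/(q:ℝ))}

lemma nu_child (L : List ℕ) (hL : ∀ x ∈ L, 1 ≤ x) (i : ℕ) :
    ν (L ++ [1+i]) = (1/(qq L : ℝ)) * (1/((qq' L : ℝ) + (i+1)*(qq L : ℝ)))
      - (1/(qq L : ℝ)) * (1/((qq' L : ℝ) + (i+2)*(qq L : ℝ))) := by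
  have hq : (1:ℝ) ≤ qq L := by exact_mod_cast one_le_qq L hL
  have hq' : (0:ℝ) ≤ qq' L := by positivity
  have h1 : (0:ℝ) < (qq' L : ℝ) + (i+1)*(qq L : ℝ) := by nlinarith
  have h2 : (0:ℝ) < (qq' L : ℝ) + (i+2)*(qq L : ℝ) := by nlinarith
  have hq0 : (0:ℝ) < qq L := by linarith
  have e1 : (0:ℝ) < (qq' L : ℝ) + (1+(i:ℝ))*(qq L : ℝ) := by nlinarith
  have e2 : (0:ℝ) < (qq' L : ℝ) + (1+(i:ℝ))*(qq L : ℝ) + qq L := by nlinarith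
  rw [ν, qq_append, qq'_append]
  push_cast
  field_simp
  ring

lemma sum_nu (L : List ℕ) (hL : ∀ x ∈ L, 1 ≤ x) (m : ℕ) (hm : 1 ≤ m) :
    ∑ a ∈ Finset.Ico 1 m, ν (L ++ [a]) ≤ (1 - 1/(m:ℝ)) * ν L := by
  have hq : (1:ℝ) ≤ qq L := by exact_mod_cast one_le_qq L hL
  have hq' : (0:ℝ) ≤ qq' L := by positivity
  have hqq' : (qq' L : ℝ) ≤ qq L := by exact_mod_cast qq'_le_qq L hL
  have hm0 : (0:ℝ) < m := by exact_mod_cast hm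
  set f : ℕ → ℝ := fun i => (1/(qq L : ℝ)) * (1/((qq' L : ℝ) + (i+1)*(qq L : ℝ))) with hf
  have hsum : ∑ a ∈ Finset.Ico 1 m, ν (L ++ [a])
      = ∑ i ∈ Finset.range (m - 1), (f i - f (i+1)) := by
    rw [Finset.sum_Ico_eq_sum_range]
    apply Finset.sum_congr rfl
    intro i _
    rw [nu_child L hL i, hf]
    push_cast
    ring_nf
  rw [hsum, Finset.sum_range_sub' f]
  have hfm : f (m-1) = (1/(qq L : ℝ)) * (1/((qq' L : ℝ) + m*(qq L : ℝ))) := by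
    rw [hf]
    congr 2
    have : ((m:ℕ) : ℝ) = ((m - 1 : ℕ) : ℝ) + 1 := by
      have : (1:ℕ) ≤ m := hm
      push_cast [Nat.cast_sub this]
      ring
    rw [this]
  rw [hfm]
  have hf0 : f 0 = ν L := by
    rw [hf, ν]
    push_cast
    rw [one_div_mul_one_div]
    congr 1
    ring
  rw [hf0]
  -- remains : ν L - (1/q)(1/(q' + m q)) ≤ (1 - 1/m) ν L
  have hν : 0 < ν L := ν_pos L hL
  have hd : (0:ℝ) < (qq' L : ℝ) + m*(qq L : ℝ) := by nlinarith
  have key : (1/(m:ℝ)) * ν L ≤ (1/(qq L : ℝ)) * (1/((qq' L : ℝ) + m*(qq L : ℝ))) := by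
    rw [ν, one_div_mul_one_div, one_div_mul_one_div]
    rw [div_le_div_iff₀ (by positivity) (by positivity)]
    nlinarith [mul_nonneg (mul_nonneg
      (sub_nonneg.2 (by exact_mod_cast hm : (1:ℝ) ≤ (m:ℝ))) hq') (by linarith : (0:ℝ) ≤ qq L)]
  nlinarith

lemma qq_child_le (L : List ℕ) (hL : ∀ x ∈ L, 1 ≤ x) {a m : ℕ} (ha : 1 ≤ a) (ham : a < m) :
    qq (L ++ [a]) ≤ qq L * m := by
  rw [qq_append]
  have h1 := qq'_le_qq L hL
  have h2 := one_le_qq L hL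
  nlinarith

/-- main recursion -/
lemma main_rec (N : ℕ) (hN : 8 ≤ N) : ∀ (j : ℕ) (L : List ℕ),
    (∀ x ∈ L, 1 ≤ x) → N ≤ L.length →
    volume (EN N ∩ Cyl L) ≤ ENNReal.ofReal (2 * ν L * Pf j (qq L)) := by
  intro j
  induction j with
  | zero =>
    intro L hL hlen
    calc volume (EN N ∩ Cyl L) ≤ volume (Cyl L) := measure_mono inter_subset_right
      _ ≤ ENNReal.ofReal (2 * ν L) := volume_Cyl_le L hL
      _ = ENNReal.ofReal (2 * ν L * Pf 0 (qq L)) := by rw [show Pf 0 (qq L) = 1 from rfl, mul_one]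
  | succ j ih =>
    intro L hL hlen
    set q : ℕ := qq L with hq_def
    set m : ℕ := mfun q with hm_def
    have hq8 : 8 ≤ q := le_trans hN (le_trans hlen (length_le_qq L hL))
    have hqR : (8:ℝ) ≤ (q:ℝ) := by exact_mod_cast hq8
    have hq0 : (0:ℝ) < q := by linarith
    have hm3 : 3 ≤ m := three_le_mfun hq8
    have hmR : (3:ℝ) ≤ (m:ℝ) := by exact_mod_cast hm3
    have hlogq : (0:ℝ) < Real.log q := Real.log_pos (by linarith)
    have hlogm : Real.log q < (m:ℝ) := log_lt_mfun q
    have hNq : N ≤ q := le_trans hlen (length_le_qq L hL)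
    -- covering by children
    have hcover : EN N ∩ Cyl L ⊆ ⋃ a ∈ Finset.Ico 1 m, (EN N ∩ Cyl (L ++ [a])) := by
      rintro x ⟨hxE, t, ht, rfl⟩
      obtain ⟨⟨ht0, ht1⟩, htirr⟩ := ht
      have hcase : ¬ (t < 1/(m:ℝ)) := by
        intro hlt
        have habs : |fM L t - fM L 0| = t / (((qq' L : ℝ) * t + q) * q) :=
          fM_sub_zero L hL ht0.le
        have hq'0 : (0:ℝ) ≤ (qq' L : ℝ) := by positivity
        have hq't : (0:ℝ) ≤ (qq' L : ℝ) * t := by positivity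
        have hD : (0:ℝ) < ((qq' L : ℝ) * t + q) * q := mul_pos (by linarith) hq0
        have h5 : t * Real.log q < 1 := by
          have e1 : t * Real.log q ≤ (1/(m:ℝ)) * Real.log q :=
            mul_le_mul_of_nonneg_right hlt.le hlogq.le
          have e2 : (1/(m:ℝ)) * Real.log q < (1/(m:ℝ)) * m :=
            mul_lt_mul_of_pos_left hlogm (by positivity)
          have e3 : (1/(m:ℝ)) * m = 1 := by field_simp
          linarith
        have happrox : |fM L t - fM L 0| ≤ (1/((q:ℝ) * Real.log q))/(q:ℝ) := by
          rw [habs, div_div]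
          rw [div_le_div_iff₀ hD (by positivity)]
          nlinarith [mul_lt_mul_of_pos_right h5 (mul_pos hq0 hq0),
            mul_nonneg (mul_nonneg hq'0 ht0.le) hq0.le]
        exact hxE.2.2 q hNq (pp L : ℤ)
          (by rw [fM_zero] at happrox; push_cast; push_cast at happrox; exact happrox)
      push_neg at hcase
      obtain ⟨a, ha1, hale, hmem⟩ := child_of_t L hL ⟨⟨ht0, ht1⟩, htirr⟩
      have htne : t ≠ 1/(m:ℝ) := by
        intro h
        apply htirr
        exact ⟨1/(m:ℚ), by push_cast [h]; ring⟩
      have htgt : 1/(m:ℝ) < t := lt_of_le_of_ne hcase (Ne.symm htne)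
      have ham : a < m := by
        have h1 : 1/t < (m:ℝ) := by
          rw [div_lt_iff₀ ht0]
          rw [div_lt_iff₀ (by positivity : (0:ℝ) < (m:ℝ))] at htgt
          linarith
        have : (a:ℝ) < (m:ℝ) := lt_of_le_of_lt hale h1
        exact_mod_cast this
      exact mem_biUnion (Finset.mem_Ico.2 ⟨ha1, ham⟩) ⟨hxE, hmem⟩
    -- children data
    have hchild_good : ∀ a ∈ Finset.Ico 1 m, ∀ x ∈ L ++ [a], 1 ≤ x := by
      intro a ha x hx
      rcases List.mem_append.1 hx with h | h
      · exact hL x h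
      · simp at h; subst h; exact (Finset.mem_Ico.1 ha).1
    have hPf_child : ∀ a ∈ Finset.Ico 1 m,
        2 * ν (L ++ [a]) * Pf j (qq (L ++ [a])) ≤ 2 * ν (L ++ [a]) * Pf j (q * m) := by
      intro a ha
      obtain ⟨ha1, ham⟩ := Finset.mem_Ico.1 ha
      apply mul_le_mul_of_nonneg_left (Pf_mono j (qq_child_le L hL ha1 ham))
      have := ν_pos (L ++ [a]) (hchild_good a ha)
      linarith
    calc volume (EN N ∩ Cyl L)
        ≤ volume (⋃ a ∈ Finset.Ico 1 m, (EN N ∩ Cyl (L ++ [a]))) := measure_mono hcover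
      _ ≤ ∑ a ∈ Finset.Ico 1 m, volume (EN N ∩ Cyl (L ++ [a])) :=
          measure_biUnion_finset_le _ _
      _ ≤ ∑ a ∈ Finset.Ico 1 m, ENNReal.ofReal (2 * ν (L ++ [a]) * Pf j (qq (L ++ [a]))) := by
          apply Finset.sum_le_sum
          intro a ha
          exact ih (L ++ [a]) (hchild_good a ha) (by simp; omega)
      _ ≤ ∑ a ∈ Finset.Ico 1 m, ENNReal.ofReal (2 * ν (L ++ [a]) * Pf j (q * m)) := by
          apply Finset.sum_le_sum
          intro a ha
          exact ENNReal.ofReal_le_ofReal (hPf_child a ha)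
      _ = ENNReal.ofReal (∑ a ∈ Finset.Ico 1 m, 2 * ν (L ++ [a]) * Pf j (q * m)) := by
          rw [ENNReal.ofReal_sum_of_nonneg]
          intro a ha
          have := ν_pos (L ++ [a]) (hchild_good a ha)
          have := Pf_nonneg j (q * m)
          positivity
      _ ≤ ENNReal.ofReal (2 * ν L * Pf (j+1) q) := by
          apply ENNReal.ofReal_le_ofReal
          have hsum : ∑ a ∈ Finset.Ico 1 m, 2 * ν (L ++ [a]) * Pf j (q * m)
              = (∑ a ∈ Finset.Ico 1 m, ν (L ++ [a])) * (2 * Pf j (q * m)) := by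
            rw [Finset.sum_mul]
            apply Finset.sum_congr rfl
            intro a _
            ring
          rw [hsum]
          have h1 : (∑ a ∈ Finset.Ico 1 m, ν (L ++ [a])) * (2 * Pf j (q * m))
              ≤ ((1 - 1/(m:ℝ)) * ν L) * (2 * Pf j (q * m)) := by
            apply mul_le_mul_of_nonneg_right (sum_nu L hL m (by omega))
            have := Pf_nonneg j (q * m)
            linarith
          have h2 : ((1 - 1/(m:ℝ)) * ν L) * (2 * Pf j (q * m)) = 2 * ν L * Pf (j+1) q := by
            show _ = 2 * ν L * ((1 - 1/(mfun q : ℝ)) * Pf j (q * mfun q))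
            rw [← hm_def]
            ring
          linarith

end Khinchin

namespace Khinchin
open MeasureTheory Set Filter

def PairSet (ω : ℝ) : Set (ℤ × ℕ) :=
  {pq : ℤ × ℕ | 2 ≤ pq.2 ∧ |ω - (pq.1 : ℝ) / (pq.2 : ℝ)| ≤
    (1 / ((pq.2 : ℝ) * Real.log (pq.2 : ℝ))) / (pq.2 : ℝ)}

def Sset : Set ℝ := {ω : ℝ | (PairSet ω).Infinite}

lemma rhs_nonneg (q : ℕ) : 0 ≤ (1 / ((q : ℝ) * Real.log (q : ℝ))) / (q : ℝ) := by
  have h1 : (0:ℝ) ≤ Real.log q := by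
    rcases Nat.eq_zero_or_pos q with h | h
    · subst h; simp
    · exact Real.log_nonneg (by exact_mod_cast h)
  have h2 : (0:ℝ) ≤ (q:ℝ) := by positivity
  apply div_nonneg _ h2
  exact div_nonneg zero_le_one (by positivity)

lemma rat_mem_S (r : ℚ) : ((r : ℝ)) ∈ Sset := by
  have hden : 1 ≤ r.den := r.pos
  refine Set.infinite_of_injective_forall_mem
    (f := fun k : ℕ => ((((k+2) : ℕ) : ℤ) * r.num, (k+2) * r.den)) ?_ ?_
  · intro k1 k2 h
    have h2 := congrArg Prod.snd h
    simp only at h2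
    have : k1 + 2 = k2 + 2 := Nat.eq_of_mul_eq_mul_right r.pos h2
    omega
  · intro k
    constructor
    · show 2 ≤ (k+2) * r.den
      calc 2 ≤ (k+2) * 1 := by omega
        _ ≤ (k+2) * r.den := Nat.mul_le_mul_left _ hden
    · show |(r:ℝ) - _ / _| ≤ _
      dsimp only
      have hcast : (((((k+2) : ℕ) : ℤ) * r.num : ℤ) : ℝ) / (((k+2) * r.den : ℕ) : ℝ) = (r:ℝ) := by
        push_cast
        rw [Rat.cast_def]
        rw [mul_div_mul_left _ _ (by positivity : ((k:ℝ)+2) ≠ 0)]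
      rw [hcast, sub_self, abs_zero]
      exact rhs_nonneg _

lemma S_add_one {x : ℝ} (hx : x ∈ Sset) : x + 1 ∈ Sset := by
  have himg : ((fun pq : ℤ × ℕ => (pq.1 + pq.2, pq.2)) '' PairSet x).Infinite := by
    apply Set.Infinite.image _ hx
    intro a _ b _ h
    simp only [Prod.mk.injEq] at h
    obtain ⟨h1, h2⟩ := h
    ext
    · omega
    · exact h2
  apply Set.Infinite.mono _ himg
  rintro _ ⟨⟨p, q⟩, ⟨hq2, happ⟩, rfl⟩
  refine ⟨hq2, ?_⟩
  have hq0 : (0:ℝ) < (q:ℝ) := by exact_mod_cast (by omega : 0 < q)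
  have : ((p + (q:ℤ) : ℤ) : ℝ) / (q:ℝ) = (p:ℝ)/(q:ℝ) + 1 := by
    push_cast
    field_simp
  show |x + 1 - _| ≤ _
  simp only
  rw [this]
  have : x + 1 - ((p:ℝ)/(q:ℝ) + 1) = x - (p:ℝ)/(q:ℝ) := by ring
  rw [this]
  exact happ

lemma S_add_nat {x : ℝ} (hx : x ∈ Sset) (n : ℕ) : x + n ∈ Sset := by
  induction n with
  | zero => simpa using hx
  | succ n ih =>
    have := S_add_one ih
    have e : x + (n:ℝ) + 1 = x + ((n+1 : ℕ) : ℝ) := by push_cast; ring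
    rwa [e] at this

lemma EN_inter_Cyl_null {N : ℕ} (hN : 8 ≤ N) (L : List ℕ) (hL : ∀ x ∈ L, 1 ≤ x)
    (hlen : N ≤ L.length) : volume (EN N ∩ Cyl L) = 0 := by
  have hq8 : 8 ≤ qq L := le_trans hN (le_trans hlen (length_le_qq L hL))
  have hbound := fun j => main_rec N hN j L hL hlen
  have ht : Tendsto (fun j => ENNReal.ofReal (2 * ν L * Pf j (qq L))) atTop (nhds 0) := by
    have h1 : Tendsto (fun j => 2 * ν L * Pf j (qq L)) atTop (nhds 0) := by
      have := (Pf_tendsto_zero hq8).const_mul (2 * ν L)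
      simpa using this
    have := ENNReal.tendsto_ofReal h1
    simpa using this
  exact le_antisymm (ge_of_tendsto' ht hbound) zero_le

lemma EN_null {N : ℕ} (hN : 8 ≤ N) : volume (EN N) = 0 := by
  have hsub : EN N ⊆ ⋃ (L : List ℕ) (_ : (∀ x ∈ L, 1 ≤ x) ∧ L.length = N),
      (EN N ∩ Cyl L) := by
    intro x hx
    have hx' : x ∈ {t | t ∈ Ioo (0:ℝ) 1 ∧ Irrational t} := ⟨hx.1, hx.2.1⟩
    obtain ⟨L, hL⟩ := mem_iUnion.1 (covering N hx')
    obtain ⟨hprop, hmem⟩ := mem_iUnion.1 hL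
    exact mem_iUnion.2 ⟨L, mem_iUnion.2 ⟨hprop, ⟨hx, hmem⟩⟩⟩
  apply measure_mono_null hsub
  apply measure_iUnion_null
  intro L
  apply measure_iUnion_null
  intro hprop
  exact EN_inter_Cyl_null hN L hprop.1 (le_of_eq hprop.2.symm)

/-- the global null set -/
def G : Set ℝ := ⋃ (N : ℕ) (_ : 8 ≤ N), EN N

lemma G_null : volume G = 0 := by
  apply measure_iUnion_null
  intro N
  apply measure_iUnion_null
  intro hN
  exact EN_null hN

lemma B0_subset_G : (Ico (0:ℝ) 1 \ Sset) ⊆ G := by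
  rintro x ⟨⟨hx0, hx1⟩, hxS⟩
  by_cases hirr : Irrational x
  · have hx0' : 0 < x := by
      rcases lt_or_eq_of_le hx0 with h | h
      · exact h
      · exact absurd h.symm (by simpa using hirr.ne_nat 0)
    have hfin : (PairSet x).Finite := Set.not_infinite.1 hxS
    obtain ⟨B, hB⟩ := (hfin.image Prod.snd).bddAbove
    refine mem_iUnion.2 ⟨max (B+1) 8, mem_iUnion.2 ⟨le_max_right _ _, ?_⟩⟩
    refine ⟨⟨hx0', hx1⟩, hirr, ?_⟩
    intro q hq p hcond
    have hq2 : 2 ≤ q := le_trans (by omega) (le_trans (le_max_right (B+1) 8) hq)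
    have hmem : (p, q) ∈ PairSet x := ⟨hq2, hcond⟩
    have : q ∈ Prod.snd '' PairSet x := ⟨(p, q), hmem, rfl⟩
    have hqB : q ≤ B := hB this
    have : B + 1 ≤ q := le_trans (le_max_left _ _) hq
    omega
  · exfalso
    rw [Irrational] at hirr
    push_neg at hirr
    obtain ⟨r, rfl⟩ := hirr
    exact hxS (rat_mem_S r)

end Khinchin

/-- Divergence part of Khinchin's theorem for `ψ(q) = 1/(q log q)`:
almost every `ω ∈ [1,∞)` admits infinitely many `(p,q)` with
`|ω - p/q| ≤ ψ(q)/q`. -/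
theorem khinchin_log_approximable_full_measure :
    MeasureTheory.volume
      (Set.Ici (1 : ℝ) \
        {ω : ℝ | {pq : ℤ × ℕ | 2 ≤ pq.2 ∧
          |ω - (pq.1 : ℝ) / (pq.2 : ℝ)| ≤
            (1 / ((pq.2 : ℝ) * Real.log (pq.2 : ℝ))) / (pq.2 : ℝ)}.Infinite}) = 0 := by
  have hsub : Set.Ici (1 : ℝ) \ Khinchin.Sset ⊆
      ⋃ (n : ℕ), (fun y : ℝ => y + -(n:ℝ)) ⁻¹' Khinchin.G := by
    rintro ω ⟨hω1, hωS⟩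
    have hω1' : (1:ℝ) ≤ ω := hω1
    set n : ℕ := ⌊ω⌋₊ with hn_def
    have hn1 : (n:ℝ) ≤ ω := Nat.floor_le (by linarith)
    have hn2 : ω < n + 1 := Nat.lt_floor_add_one ω
    refine Set.mem_iUnion.2 ⟨n, ?_⟩
    show ω + -(n:ℝ) ∈ Khinchin.G
    apply Khinchin.B0_subset_G
    constructor
    · constructor
      · linarith
      · linarith
    · intro hS
      apply hωS
      have := Khinchin.S_add_nat hS n
      have e : ω + -(n:ℝ) + (n:ℝ) = ω := by ring
      rwa [e] at this
  apply MeasureTheory.measure_mono_null hsub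
  apply MeasureTheory.measure_iUnion_null
  intro n
  have hmp : MeasureTheory.MeasurePreserving (fun y : ℝ => y + -(n:ℝ))
      MeasureTheory.volume MeasureTheory.volume :=
    MeasureTheory.measurePreserving_add_right MeasureTheory.volume _
  rw [hmp.measure_preimage (MeasureTheory.NullMeasurableSet.of_null Khinchin.G_null)]
  exact Khinchin.G_null
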